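/- The expected leftward non-negativity condition cannot be dropped from the definition of a GLexRSM: there exist a probability space (Ω,F,P), a filtration (F_t)_{t≥0}, a stopping time T with respect to (F_t), a one-dimensional stochastic process (Y_t)_{t≥0}, and F_t-measurable sets L^t_1 = {T > t} such that ((Y_t)_{t≥0}, (L^t_1)_{t≥0}) satisfies all conditions of a GLexRSM for T except the expected leftward non-negativity condition (condition 3(d)), and yet P[T < ∞] < 1. A witnessing construction is: Y_0 = 1 with probability 1; at each step t, if Y_t ≥ 0 then with probability p_t = (1/4)·2^{-t} set Y_{t+1} = Y_t − 2/p_t and with probability 1 − p_t set Y_{t+1} = Y_t + 1/(1 − p_t); if Y_t < 0 set Y_{t+1} = Y_t; and T is the first time t with Y_t < 0. -/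

import Mathlib

open MeasureTheory Set
open scoped ENNReal

noncomputable section GLexAux

namespace GLexAux

instance : MeasurableSpace (Option ℕ) := ⊤

instance : MeasurableSingletonClass (Option ℕ) :=
  ⟨fun _ => MeasurableSpace.measurableSet_top⟩

lemma meas_all (s : Set (Option ℕ)) : MeasurableSet s :=
  MeasurableSpace.measurableSet_top

lemma measurable_all {β : Type*} [MeasurableSpace β] (f : Option ℕ → β) :
    Measurable f := fun _ _ => meas_all _

/-- point masses -/
def w : Option ℕ → ℝ≥0∞
  | none => 2⁻¹
  | some k => 2⁻¹ ^ (k + 2)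

lemma w_ne_zero (a : Option ℕ) : w a ≠ 0 := by
  cases a <;> simp [w]

def μ : Measure (Option ℕ) := Measure.sum (fun ω => w ω • Measure.dirac ω)

lemma μ_apply (s : Set (Option ℕ)) : μ s = ∑' ω, s.indicator w ω := by
  rw [μ, Measure.sum_apply _ (meas_all s)]
  congr 1; funext ω
  rw [Measure.smul_apply, Measure.dirac_apply' _ (meas_all s), smul_eq_mul]
  by_cases h : ω ∈ s <;> simp [Set.indicator, h]

lemma μ_singleton (a : Option ℕ) : μ {a} = w a := by
  rw [μ_apply]
  rw [tsum_eq_single a (fun b hb => by simp [Set.indicator, hb])]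
  simp [Set.indicator]

lemma μ_image_some (B : Set ℕ) :
    μ (Option.some '' B) = ∑' k : ℕ, B.indicator (fun k => w (some k)) k := by
  rw [μ_apply]
  rw [← Function.Injective.tsum_eq (Option.some_injective ℕ)
    (f := (Option.some '' B).indicator w) ?_]
  · congr 1; funext k
    by_cases h : k ∈ B
    · simp [Set.indicator, h]
    · have : some k ∉ Option.some '' B := by
        simp [h]
      simp [Set.indicator, h, this]
  · intro x hx
    have : x ∈ Option.some '' B := by
      by_contra hc
      exact hx (Set.indicator_of_notMem hc w)
    rcases this with ⟨k, _, rfl⟩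
    exact ⟨k, rfl⟩

lemma tsum_tail (t : ℕ) :
    (∑' k : ℕ, (Set.Ici t).indicator (fun k => (2⁻¹ : ℝ≥0∞) ^ (k + 2)) k)
      = 2⁻¹ ^ (t + 1) := by
  rw [← Function.Injective.tsum_eq (add_right_injective t)
    (f := (Set.Ici t).indicator (fun k => (2⁻¹ : ℝ≥0∞) ^ (k + 2))) ?_]
  · have : ∀ j : ℕ, (Set.Ici t).indicator (fun k => (2⁻¹ : ℝ≥0∞) ^ (k + 2)) (t + j)
        = 2⁻¹ ^ (t + 2) * 2⁻¹ ^ j := by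
      intro j
      rw [Set.indicator_of_mem (by simp : t + j ∈ Set.Ici t)]
      rw [← pow_add]; ring_nf
    rw [tsum_congr this, ENNReal.tsum_mul_left, ENNReal.tsum_geometric,
      ENNReal.one_sub_inv_two, inv_inv, pow_succ]
    rw [mul_assoc, ENNReal.inv_mul_cancel (by norm_num) (by norm_num), mul_one]
  · intro x hx
    have hxB : x ∈ Set.Ici t := by
      by_contra hc
      exact hx (Set.indicator_of_notMem hc _)
    rw [Set.mem_Ici] at hxB
    exact ⟨x - t, show t + (x - t) = x by omega⟩

/-- the tail event: still alive at time `t` -/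
def R (t : ℕ) : Set (Option ℕ) := {none} ∪ Option.some '' Set.Ici t

lemma μ_R (t : ℕ) : μ (R t) = 2⁻¹ + 2⁻¹ ^ (t + 1) := by
  rw [R, measure_union ?_ (meas_all _), μ_singleton, μ_image_some]
  · rw [show (fun k => w (some k)) = fun k => (2⁻¹ : ℝ≥0∞) ^ (k + 2) from rfl, tsum_tail]
    rfl
  · simp

lemma univ_eq_R0 : (Set.univ : Set (Option ℕ)) = R 0 := by
  ext ω; cases ω <;> simp [R]

instance μ_prob : IsProbabilityMeasure μ := by
  constructor
  rw [univ_eq_R0, μ_R, pow_one, ENNReal.inv_two_add_inv_two]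

end GLexAux

namespace GLexAux

/-- real mass of `{some t}` -/
def ar (t : ℕ) : ℝ := 2⁻¹ ^ (t + 2)

/-- real mass of the tail `R t` -/
def Qr (t : ℕ) : ℝ := 2⁻¹ + 2⁻¹ ^ (t + 1)

lemma ar_pos (t : ℕ) : 0 < ar t := by unfold ar; positivity

lemma Qr_pos (t : ℕ) : 0 < Qr t := by unfold Qr; positivity

lemma Qr_split (t : ℕ) : Qr t = ar t + Qr (t + 1) := by
  simp only [Qr, ar]
  ring

lemma toReal_μ_R (t : ℕ) : (μ (R t)).toReal = Qr t := by
  rw [μ_R, ENNReal.toReal_add (by simp) (ENNReal.pow_ne_top (by simp))]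
  simp [Qr, ENNReal.toReal_pow]

lemma toReal_μ_some (t : ℕ) : (μ {some t}).toReal = ar t := by
  rw [μ_singleton]
  simp [w, ar, ENNReal.toReal_pow]

/-- value of the process while alive -/
def uu : ℕ → ℝ
  | 0 => 1
  | t + 1 => uu t + Qr t / Qr (t + 1)

/-- value of the process after dying at step `k` -/
def dd (k : ℕ) : ℝ := uu k - 2 * Qr k / ar k

lemma uu_ge_one (t : ℕ) : 1 ≤ uu t := by
  induction t with
  | zero => simp [uu]
  | succ t ih =>
    have h := div_pos (Qr_pos t) (Qr_pos (t + 1))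
    simp only [uu]
    linarith

lemma key_identity (t : ℕ) :
    Qr t * (uu t - 1) = ar t * dd t + Qr (t + 1) * uu (t + 1) := by
  have h1 : ar t * (2 * Qr t / ar t) = 2 * Qr t := by
    rw [mul_comm]; exact div_mul_cancel₀ _ (ne_of_gt (ar_pos t))
  have h2 : Qr (t + 1) * (Qr t / Qr (t + 1)) = Qr t := by
    rw [mul_comm]; exact div_mul_cancel₀ _ (ne_of_gt (Qr_pos (t + 1)))
  simp only [uu, dd, mul_sub, mul_add, h1, h2]
  rw [Qr_split t]
  ring

end GLexAux

namespace GLexAux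

/-- what is observable at time `t` -/
def proj (t : ℕ) : Option ℕ → Option ℕ
  | none => none
  | some k => if k < t then some k else none

lemma proj_comp {s t : ℕ} (hst : s ≤ t) : proj s = proj s ∘ proj t := by
  funext ω
  cases ω with
  | none => rfl
  | some k =>
    by_cases h : k < t
    · simp [proj, h]
    · have : ¬ k < s := by omega
      simp [proj, h, this]

/-- the filtration -/
def F (t : ℕ) : MeasurableSpace (Option ℕ) :=
  MeasurableSpace.comap (proj t) ⊤

lemma F_le_top (t : ℕ) : F t ≤ (inferInstance : MeasurableSpace (Option ℕ)) :=
  le_top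

lemma F_mono : Monotone F := by
  intro s t hst
  rw [F, proj_comp hst, ← MeasurableSpace.comap_comp]
  exact MeasurableSpace.comap_mono le_top

lemma measurableSet_F {t : ℕ} (A : Set (Option ℕ)) :
    MeasurableSet[F t] (proj t ⁻¹' A) :=
  ⟨A, MeasurableSpace.measurableSet_top, rfl⟩

lemma measurable_F_comp {t : ℕ} (f : Option ℕ → ℝ) :
    Measurable[F t] (fun ω => f (proj t ω)) := by
  intro s _
  exact ⟨f ⁻¹' s, MeasurableSpace.measurableSet_top, rfl⟩

/-- the stopping time -/
def T : Option ℕ → ℕ∞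
  | none => ⊤
  | some k => ((k + 1 : ℕ) : ℕ∞)

/-- the process -/
def Y (t : ℕ) : Option ℕ → ℝ := fun ω =>
  match proj t ω with
  | none => uu t
  | some k => dd k

/-- explicit version of the conditional expectation `μ[Y (t+1) | F t]` -/
def g (t : ℕ) : Option ℕ → ℝ := fun ω =>
  match proj t ω with
  | none => uu t - 1
  | some k => dd k

lemma R_eq_preimage (t : ℕ) : R t = proj t ⁻¹' {none} := by
  ext ω
  cases ω with
  | none => simp [R, proj]
  | some k =>
    simp only [R, Set.mem_union, Set.mem_singleton_iff, Set.mem_preimage, Set.mem_image]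
    constructor
    · rintro (h | ⟨j, hj, hjk⟩)
      · exact absurd h (by simp)
      · cases hjk
        simp only [Set.mem_Ici] at hj
        simp [proj, Nat.not_lt.2 hj]
    · intro h
      by_cases hk : k < t
      · simp [proj, hk] at h
      · exact Or.inr ⟨k, not_lt.1 hk, rfl⟩

lemma R_split (t : ℕ) : R t = {some t} ∪ R (t + 1) := by
  rw [R_eq_preimage, R_eq_preimage]
  ext ω
  cases ω with
  | none => simp [proj]
  | some k =>
    by_cases h : k < t
    · simp [proj, h, show k < t + 1 by omega, show k ≠ t by omega]
    · by_cases h' : k = t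
      · subst h'
        simp [proj, h]
      · simp [proj, h, show ¬ k < t + 1 by omega, h']

lemma set_T_le (t : ℕ) : {ω | T ω ≤ (t : ℕ∞)} = proj t ⁻¹' {none}ᶜ := by
  ext ω
  cases ω with
  | none =>
    simp only [Set.mem_setOf_eq, T, Set.mem_preimage, proj]
    simp
  | some k =>
    simp only [Set.mem_setOf_eq, T, Set.mem_preimage, Set.mem_compl_iff,
      Set.mem_singleton_iff]
    rw [Nat.cast_le]
    by_cases h : k < t
    · simp [proj, h]
    · simp [proj, h]

lemma set_T_gt (t : ℕ) : {ω | (t : ℕ∞) < T ω} = R t := by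
  rw [R_eq_preimage]
  ext ω
  cases ω with
  | none =>
    simp only [Set.mem_setOf_eq, T, Set.mem_preimage, proj]
    simp [lt_top_iff_ne_top]
  | some k =>
    simp only [Set.mem_setOf_eq, T, Set.mem_preimage, Set.mem_singleton_iff]
    rw [Nat.cast_lt]
    by_cases h : k < t
    · simp [proj, h]
    · simp [proj, h]
      omega

lemma integrable_comp (Z : Option ℕ → ℝ) (t : ℕ) :
    Integrable (fun ω => Z (proj t ω)) μ := by
  set C : ℝ := |Z none| + ∑ k ∈ Finset.range t, |Z (some k)| with hC
  have hb : ∀ ω, ‖Z (proj t ω)‖ ≤ C := by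
    intro ω
    rw [Real.norm_eq_abs]
    have hsum : (0:ℝ) ≤ ∑ k ∈ Finset.range t, |Z (some k)| :=
      Finset.sum_nonneg fun _ _ => abs_nonneg _
    cases ω with
    | none =>
      simp only [proj]
      exact le_add_of_nonneg_right hsum |>.trans_eq hC.symm |>.trans_eq rfl
    | some k =>
      by_cases h : k < t
      · simp only [proj, h, if_pos]
        have h1 : |Z (some k)| ≤ ∑ j ∈ Finset.range t, |Z (some j)| :=
          Finset.single_le_sum (f := fun j => |Z (some j)|)
            (fun _ _ => abs_nonneg _) (Finset.mem_range.2 h)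
        calc |Z (some k)| ≤ ∑ j ∈ Finset.range t, |Z (some j)| := h1
          _ ≤ C := le_add_of_nonneg_left (abs_nonneg _)
      · simp only [proj, h, if_neg, not_false_iff]
        exact le_add_of_nonneg_right hsum
  exact Integrable.mono' (integrable_const C)
    ((measurable_all _).aestronglyMeasurable) (Filter.Eventually.of_forall hb)

lemma integrable_Y (t : ℕ) : Integrable (Y t) μ :=
  integrable_comp (fun o => match o with | none => uu t | some k => dd k) t

lemma integrable_g (t : ℕ) : Integrable (g t) μ :=
  integrable_comp (fun o => match o with | none => uu t - 1 | some k => dd k) t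

end GLexAux

namespace GLexAux

lemma Y_none {t : ℕ} {ω : Option ℕ} (h : proj t ω = none) : Y t ω = uu t := by
  unfold Y; rw [h]

lemma Y_some {t k : ℕ} {ω : Option ℕ} (h : proj t ω = some k) : Y t ω = dd k := by
  unfold Y; rw [h]

lemma g_none {t : ℕ} {ω : Option ℕ} (h : proj t ω = none) : g t ω = uu t - 1 := by
  unfold g; rw [h]

lemma g_some {t k : ℕ} {ω : Option ℕ} (h : proj t ω = some k) : g t ω = dd k := by
  unfold g; rw [h]

lemma proj_eq_some {t k : ℕ} {ω : Option ℕ} (h : proj t ω = some k) :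
    ω = some k ∧ k < t := by
  cases ω with
  | none => simp [proj] at h
  | some j =>
    by_cases hj : j < t
    · simp only [proj, if_pos hj] at h
      cases h
      exact ⟨rfl, hj⟩
    · simp [proj, hj] at h

lemma mem_R_iff {t : ℕ} {ω : Option ℕ} : ω ∈ R t ↔ proj t ω = none := by
  rw [R_eq_preimage]; rfl

lemma ae_eq_imp_eq {f h : Option ℕ → ℝ} (hfh : f =ᵐ[μ] h) : f = h := by
  funext ω
  by_contra hne
  have h0 : μ {x | ¬ f x = h x} = 0 := ae_iff.1 hfh
  have h1 : μ {ω} ≤ μ {x | ¬ f x = h x} := by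
    apply measure_mono
    intro x hx
    rw [Set.mem_singleton_iff] at hx
    subst hx
    exact hne
  rw [μ_singleton] at h1
  exact w_ne_zero ω (le_antisymm (h0 ▸ h1) zero_le)

lemma integral_R_g (t : ℕ) : ∫ ω in R t, g t ω ∂μ = Qr t * (uu t - 1) := by
  rw [setIntegral_congr_fun (meas_all _)
    (fun ω hω => g_none (mem_R_iff.1 hω) : Set.EqOn (g t) (fun _ => uu t - 1) (R t)),
    setIntegral_const, measureReal_def, toReal_μ_R, smul_eq_mul]

lemma integral_R_Y (t : ℕ) :
    ∫ ω in R t, Y (t + 1) ω ∂μ = ar t * dd t + Qr (t + 1) * uu (t + 1) := by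
  have hdisj : Disjoint ({some t} : Set (Option ℕ)) (R (t + 1)) := by
    rw [Set.disjoint_singleton_left, mem_R_iff]
    simp [proj]
  rw [R_split, setIntegral_union hdisj (meas_all _)
    ((integrable_Y (t + 1)).integrableOn) ((integrable_Y (t + 1)).integrableOn)]
  have h1 : ∫ ω in ({some t} : Set (Option ℕ)), Y (t + 1) ω ∂μ = ar t * dd t := by
    have hp : proj (t + 1) (some t) = some t := by simp [proj]
    rw [setIntegral_congr_fun (meas_all _)
      (fun ω hω => by rw [Set.mem_singleton_iff] at hω; subst hω; exact Y_some hp :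
        Set.EqOn (Y (t + 1)) (fun _ => dd t) {some t}),
      setIntegral_const, measureReal_def, toReal_μ_some, smul_eq_mul]
  have h2 : ∫ ω in R (t + 1), Y (t + 1) ω ∂μ = Qr (t + 1) * uu (t + 1) := by
    rw [setIntegral_congr_fun (meas_all _)
      (fun ω hω => Y_none (mem_R_iff.1 hω) :
        Set.EqOn (Y (t + 1)) (fun _ => uu (t + 1)) (R (t + 1))),
      setIntegral_const, measureReal_def, toReal_μ_R, smul_eq_mul]
  rw [h1, h2]

lemma eqOn_g_Y {t : ℕ} {s : Set (Option ℕ)} (hs : ∀ ω ∈ s, proj t ω ≠ none) :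
    Set.EqOn (g t) (Y (t + 1)) s := by
  intro ω hω
  obtain ⟨k, hk⟩ : ∃ k, proj t ω = some k := by
    cases h : proj t ω with
    | none => exact absurd h (hs ω hω)
    | some k => exact ⟨k, rfl⟩
  obtain ⟨hωk, hkt⟩ := proj_eq_some hk
  have hk' : proj (t + 1) ω = some k := by
    subst hωk
    simp [proj, show k < t + 1 by omega]
  rw [g_some hk, Y_some hk']

lemma condexp_Y (t : ℕ) : μ[Y (t + 1) | F t] = g t := by
  have hm : F t ≤ (inferInstance : MeasurableSpace (Option ℕ)) := F_le_top t
  haveI : SigmaFinite (μ.trim hm) := inferInstance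
  refine (ae_eq_imp_eq (ae_eq_condExp_of_forall_setIntegral_eq hm
    (integrable_Y (t + 1)) (fun s _ _ => (integrable_g t).integrableOn) ?_ ?_)).symm
  · intro s hs _
    obtain ⟨A, -, rfl⟩ := hs
    by_cases hA : none ∈ A
    · have hR : R t ⊆ proj t ⁻¹' A := by
        intro ω hω
        rw [mem_R_iff] at hω
        show proj t ω ∈ A
        rw [hω]; exact hA
      have hsplit : proj t ⁻¹' A = (proj t ⁻¹' A \ R t) ∪ R t :=
        (Set.diff_union_of_subset hR).symm
      rw [hsplit,
        setIntegral_union disjoint_sdiff_self_left (meas_all _)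
          ((integrable_g t).integrableOn) ((integrable_g t).integrableOn),
        setIntegral_union disjoint_sdiff_self_left (meas_all _)
          ((integrable_Y (t + 1)).integrableOn) ((integrable_Y (t + 1)).integrableOn)]
      congr 1
      · apply setIntegral_congr_fun (meas_all _)
        apply eqOn_g_Y
        intro ω hω
        rw [Set.mem_diff, mem_R_iff] at hω
        exact hω.2
      · rw [integral_R_g, integral_R_Y, key_identity]
    · apply setIntegral_congr_fun (meas_all _)
      apply eqOn_g_Y
      intro ω hω
      intro hnone
      exact hA (by rw [← hnone]; exact hω)
  · exact StronglyMeasurable.aestronglyMeasurable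
      (Measurable.stronglyMeasurable (measurable_F_comp
        (fun o => match o with | none => uu t - 1 | some k => dd k)))

end GLexAux

namespace GLexAux

/-- the filtration bundled -/
def Filt : Filtration ℕ (inferInstance : MeasurableSpace (Option ℕ)) :=
  ⟨F, F_mono, F_le_top⟩

lemma set_T_lt_top : {ω : Option ℕ | T ω < ⊤} = ({none} : Set (Option ℕ))ᶜ := by
  ext ω
  cases ω with
  | none => simp [T]
  | some k =>
    simp only [Set.mem_setOf_eq, Set.mem_compl_iff, Set.mem_singleton_iff]
    refine iff_of_true ?_ (by simp)
    exact ENat.coe_lt_top (k + 1)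

lemma μ_T_lt_top : μ {ω : Option ℕ | T ω < ⊤} < 1 := by
  rw [set_T_lt_top, measure_compl (meas_all _) (measure_ne_top μ _), μ_singleton]
  have huniv : μ Set.univ = 1 := measure_univ
  rw [huniv]
  show (1 : ℝ≥0∞) - 2⁻¹ < 1
  rw [ENNReal.one_sub_inv_two]
  exact ENNReal.inv_lt_one.2 ENNReal.one_lt_two

end GLexAux

theorem glexrsm_unsound_without_exp_nneg' :
    ∃ (Ω : Type) (mΩ : MeasurableSpace Ω) (μ : Measure Ω),
      IsProbabilityMeasure μ ∧
      ∃ (ℱ : Filtration ℕ mΩ) (T : Ω → ℕ∞) (Y : ℕ → Ω → ℝ),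
        (∀ t : ℕ, MeasurableSet[ℱ t] {ω | T ω ≤ (t : ℕ∞)}) ∧
        (∀ t : ℕ, MeasurableSet[ℱ t] {ω | (t : ℕ∞) < T ω}) ∧
        (∀ t : ℕ, StronglyMeasurable[ℱ t] (Y t)) ∧
        (∀ t : ℕ, Integrable (Y t) μ) ∧
        (∀ t : ℕ, ∀ ω ∈ {ω | (t : ℕ∞) < T ω}, (μ[Y (t + 1) | ℱ t]) ω ≤ Y t ω) ∧
        (∀ t : ℕ, ∀ ω ∈ {ω | (t : ℕ∞) < T ω}, (μ[Y (t + 1) | ℱ t]) ω ≤ Y t ω - 1) ∧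
        (∀ t : ℕ, ∀ ω ∈ {ω | (t : ℕ∞) < T ω}, 0 ≤ Y t ω) ∧
        μ {ω | T ω < ⊤} < 1 := by
  classical
  refine ⟨Option ℕ, inferInstance, GLexAux.μ, GLexAux.μ_prob,
    GLexAux.Filt, GLexAux.T, GLexAux.Y, ?_, ?_, ?_, ?_, ?_, ?_, ?_, GLexAux.μ_T_lt_top⟩
  · intro t
    rw [GLexAux.set_T_le]
    exact GLexAux.measurableSet_F _
  · intro t
    rw [GLexAux.set_T_gt, GLexAux.R_eq_preimage]
    exact GLexAux.measurableSet_F _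
  · intro t
    exact Measurable.stronglyMeasurable (GLexAux.measurable_F_comp
      (fun o => match o with | none => GLexAux.uu t | some k => GLexAux.dd k))
  · exact GLexAux.integrable_Y
  · intro t ω hω
    rw [GLexAux.set_T_gt] at hω
    have hnone := GLexAux.mem_R_iff.1 hω
    have hfe : GLexAux.Filt t = GLexAux.F t := rfl
    rw [hfe, GLexAux.condexp_Y t, GLexAux.g_none hnone, GLexAux.Y_none hnone]
    linarith
  · intro t ω hω
    rw [GLexAux.set_T_gt] at hω
    have hnone := GLexAux.mem_R_iff.1 hω
    have hfe : GLexAux.Filt t = GLexAux.F t := rfl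
    rw [hfe, GLexAux.condexp_Y t, GLexAux.g_none hnone, GLexAux.Y_none hnone]
  · intro t ω hω
    rw [GLexAux.set_T_gt] at hω
    rw [GLexAux.Y_none (GLexAux.mem_R_iff.1 hω)]
    linarith [GLexAux.uu_ge_one t]


/-- **Unsoundness without expected leftward non-negativity.** There exist a probability
space, a filtration `ℱ`, a stopping time `T` (with values in `ℕ∞`), and a one-dimensional
stochastic process `Y` with the single level set `L t 1 = {T > t}` (which is
`ℱ t`-measurable), satisfying all the defining conditions of a GLexRSM for `T` except the
expected leftward non-negativity condition — namely: (1) each `Y t` is `ℱ t`-measurable;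
(2) each `Y t` is integrable (so all required conditional expectations exist);
(3a)–(3b) `E[Y (t+1) | ℱ t](ω) ≤ Y t ω` and even `≤ Y t ω − 1` on `{T > t}`;
(3c) `Y t ω ≥ 0` on `{T > t}` — and yet `P[T < ∞] < 1`. -/
theorem glexrsm_unsound_without_exp_nneg :
    ∃ (Ω : Type) (mΩ : MeasurableSpace Ω) (μ : Measure Ω),
      IsProbabilityMeasure μ ∧
      ∃ (ℱ : Filtration ℕ mΩ) (T : Ω → ℕ∞) (Y : ℕ → Ω → ℝ),
        -- `T` is a stopping time with respect to `ℱ`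
        (∀ t : ℕ, MeasurableSet[ℱ t] {ω | T ω ≤ (t : ℕ∞)}) ∧
        -- the level set `L t 1 = {T > t}` is `ℱ t`-measurable
        (∀ t : ℕ, MeasurableSet[ℱ t] {ω | (t : ℕ∞) < T ω}) ∧
        -- (1) `Y t` is `ℱ t`-measurable
        (∀ t : ℕ, StronglyMeasurable[ℱ t] (Y t)) ∧
        -- (2) `Y t` is integrable, so the required conditional expectations exist
        (∀ t : ℕ, Integrable (Y t) μ) ∧
        -- (3a) expected non-increase on `L t 1 = {T > t}`
        (∀ t : ℕ, ∀ ω ∈ {ω | (t : ℕ∞) < T ω}, (μ[Y (t + 1) | ℱ t]) ω ≤ Y t ω) ∧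
        -- (3b) expected decrease by 1 on `L t 1 = {T > t}`
        (∀ t : ℕ, ∀ ω ∈ {ω | (t : ℕ∞) < T ω}, (μ[Y (t + 1) | ℱ t]) ω ≤ Y t ω - 1) ∧
        -- (3c) non-negativity on `L t 1 = {T > t}`
        (∀ t : ℕ, ∀ ω ∈ {ω | (t : ℕ∞) < T ω}, 0 ≤ Y t ω) ∧
        -- yet `T` is not almost surely finite
        μ {ω | T ω < ⊤} < 1 := by
  exact glexrsm_unsound_without_exp_nneg'
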